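/- Under the setup of the previous statement (h with both positive and negative real roots, k_-, k_+ as defined, ξ the unique critical point of h in (-k_+, k_-)), suppose ξ ∈ (0, k_-) and h'' has a root y* in (0, ξ). Then h'' has a root in (0, ξ) if and only if θ := γ² − Σ_{i=1}^n a_i/k_i² > 0, where γ = Σ_{i=1}^n ε_i·a_i/k_i. -/

import Mathlib

open Polynomial Filter Set

lemma neg_slope_right {g : ℝ → ℝ} {x m : ℝ} (hg : HasDerivAt g m x) (hm : m < 0)
    (hx : g x = 0) : ∀ᶠ y in nhdsWithin x (Set.Ioi x), g y < 0 := by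
  have ht := hasDerivAt_iff_tendsto_slope.mp hg
  have h1 : ∀ᶠ y in nhdsWithin x {x}ᶜ, slope g x y < 0 := ht (Iio_mem_nhds hm)
  have h2 : ∀ᶠ y in nhdsWithin x (Set.Ioi x), slope g x y < 0 :=
    h1.filter_mono (nhdsWithin_mono x (fun y hy => ne_of_gt hy))
  filter_upwards [h2, self_mem_nhdsWithin] with y hy hy'
  rw [slope_def_field, div_neg_iff] at hy
  rcases hy with ⟨_, h⟩ | ⟨h, _⟩
  · linarith [Set.mem_Ioi.mp hy']
  · linarith [hx ▸ h]

lemma pos_slope_left {g : ℝ → ℝ} {x m : ℝ} (hg : HasDerivAt g m x) (hm : m < 0)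
    (hx : g x = 0) : ∀ᶠ y in nhdsWithin x (Set.Iio x), 0 < g y := by
  have ht := hasDerivAt_iff_tendsto_slope.mp hg
  have h1 : ∀ᶠ y in nhdsWithin x {x}ᶜ, slope g x y < 0 := ht (Iio_mem_nhds hm)
  have h2 : ∀ᶠ y in nhdsWithin x (Set.Iio x), slope g x y < 0 :=
    h1.filter_mono (nhdsWithin_mono x (fun y hy => ne_of_lt hy))
  filter_upwards [h2, self_mem_nhdsWithin] with y hy hy'
  rw [slope_def_field, div_neg_iff] at hy
  rcases hy with ⟨h, _⟩ | ⟨_, h⟩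
  · linarith [hx ▸ h]
  · linarith [Set.mem_Iio.mp hy']

theorem stmt7 (n : ℕ) (ε : Fin n → ℝ) (hε : ∀ i, ε i = 1 ∨ ε i = -1)
    (k : Fin n → ℝ) (hk : ∀ i, 0 < k i) (a : Fin n → ℕ) (ha : ∀ i, 1 ≤ a i)
    (kp km : ℝ)
    (hkp : IsLeast {r | ∃ i, ε i = 1 ∧ k i = r} kp)
    (hkm : IsLeast {r | ∃ i, ε i = -1 ∧ k i = r} km)
    (h : ℝ[X]) (hh : h = ∏ i, (C (ε i) * X + C (k i)) ^ a i)
    (ξ : ℝ) (hξ : ξ ∈ Set.Ioo (0 : ℝ) km) (hcrit : (derivative h).eval ξ = 0)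
    (huniq : ∀ ζ ∈ Set.Ioo (-kp) km, (derivative h).eval ζ = 0 → ζ = ξ) :
    (∃ y ∈ Set.Ioo 0 ξ, (derivative (derivative h)).eval y = 0) ↔
      0 < (∑ i, ε i * (a i : ℝ) / k i) ^ 2 - ∑ i, (a i : ℝ) / (k i) ^ 2 := by
  obtain ⟨⟨im, him1, him2⟩, hkml⟩ := hkm
  obtain ⟨hξ0, hξkm⟩ := hξ
  -- basic facts about ε
  have hε2 : ∀ i, ε i * ε i = 1 := fun i => by rcases hε i with h1 | h1 <;> rw [h1] <;> norm_num
  have ha1 : ∀ i, (1 : ℝ) ≤ (a i : ℝ) := fun i => by exact_mod_cast ha i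
  -- the factor functions
  set c : Fin n → ℝ → ℝ := fun i y => ε i * y + k i with hc_def
  set Hf : ℝ → ℝ := fun y => ∏ i, (c i y) ^ (a i) with hHf_def
  set Sf : ℝ → ℝ := fun y => ∑ i, (a i : ℝ) * ε i / c i y with hSf_def
  set Tf : ℝ → ℝ := fun y => ∑ i, (a i : ℝ) / (c i y) ^ 2 with hTf_def
  set Uf : ℝ → ℝ := fun y => ∑ i, (a i : ℝ) * ε i / (c i y) ^ 3 with hUf_def
  set g : ℝ → ℝ := fun y => (Sf y) ^ 2 - Tf y with hg_def
  set P : Set ℝ := Set.Icc 0 ξ with hP_def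
  have hξP : ξ ∈ P := ⟨le_of_lt hξ0, le_refl ξ⟩
  have h0P : (0 : ℝ) ∈ P := ⟨le_refl 0, le_of_lt hξ0⟩
  -- positivity of factors on P
  have hcpos : ∀ y ∈ P, ∀ i, 0 < c i y := by
    intro y hy i
    rcases hε i with h1 | h1
    · have : (0:ℝ) ≤ y := hy.1
      simp only [hc_def, h1, one_mul]
      linarith [hk i]
    · have hykm : y < km := lt_of_le_of_lt hy.2 hξkm
      have : km ≤ k i := hkml ⟨i, h1, rfl⟩
      simp only [hc_def, h1, neg_one_mul]
      linarith
  have hcne : ∀ y ∈ P, ∀ i, c i y ≠ 0 := fun y hy i => ne_of_gt (hcpos y hy i)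
  have hHpos : ∀ y ∈ P, 0 < Hf y := fun y hy =>
    Finset.prod_pos fun i _ => pow_pos (hcpos y hy i) _
  -- eval of h
  have hHeval : ∀ y, h.eval y = Hf y := by
    intro y
    rw [hh]
    simp [hHf_def, hc_def, eval_prod]
  -- derivative of c i
  have hcder : ∀ i y, HasDerivAt (c i) (ε i) y := by
    intro i y
    have := ((hasDerivAt_id y).const_mul (ε i)).add_const (k i)
    rw [mul_one] at this
    exact this
  -- derivative of Hf
  have hHder : ∀ y ∈ P, HasDerivAt Hf (Hf y * Sf y) y := by
    intro y hy
    have hbase := HasDerivAt.fun_finsetProd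
      (u := Finset.univ) (f := fun i z => (c i z) ^ (a i))
      (f' := fun i => (a i : ℝ) * (c i y) ^ (a i - 1) * ε i)
      (x := y) (fun i _ => (hcder i y).pow (a i))
    have heq : (∑ i, (∏ j ∈ Finset.univ.erase i, (c j y) ^ (a j)) •
        ((a i : ℝ) * (c i y) ^ (a i - 1) * ε i)) = Hf y * Sf y := by
      rw [hSf_def, Finset.mul_sum]
      refine Finset.sum_congr rfl fun i _ => ?_
      have hprod : (c i y) ^ (a i) * ∏ j ∈ Finset.univ.erase i, (c j y) ^ (a j) = Hf y :=
        Finset.mul_prod_erase Finset.univ (fun j => (c j y) ^ (a j)) (Finset.mem_univ i)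
      obtain ⟨b, hb⟩ : ∃ b, a i = b + 1 := ⟨a i - 1, (Nat.succ_pred_eq_of_pos (ha i)).symm⟩
      rw [smul_eq_mul, ← hprod, hb]
      simp only [Nat.add_sub_cancel, pow_succ]
      have := hcne y hy i
      field_simp
    rw [← heq]
    exact hbase
  -- derivative of Sf
  have hSder : ∀ y ∈ P, HasDerivAt Sf (-Tf y) y := by
    intro y hy
    have hterm : ∀ i, HasDerivAt (fun z => (a i : ℝ) * ε i / c i z)
        (-((a i : ℝ) / (c i y) ^ 2)) y := by
      intro i
      have h1 : HasDerivAt (fun z => ((a i : ℝ) * ε i) * (c i z)⁻¹)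
          (((a i : ℝ) * ε i) * (-(ε i) / (c i y) ^ 2)) y :=
        ((hcder i y).inv (hcne y hy i)).const_mul _
      have h2 : ((a i : ℝ) * ε i) * (-ε i / c i y ^ 2) = -((a i : ℝ) / (c i y) ^ 2) := by
        have e : ((a i : ℝ) * ε i) * (-ε i / c i y ^ 2)
            = -(((ε i * ε i) * (a i : ℝ)) / (c i y) ^ 2) := by ring
        rw [e, hε2 i, one_mul]
      rw [h2] at h1
      simpa [div_eq_mul_inv] using h1
    have := HasDerivAt.fun_sum (u := Finset.univ) (fun i _ => hterm i)
    simpa [hTf_def, Finset.sum_neg_distrib] using this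
  -- derivative of Tf
  have hTder : ∀ y ∈ P, HasDerivAt Tf (-2 * Uf y) y := by
    intro y hy
    have hterm : ∀ i, HasDerivAt (fun z => (a i : ℝ) / (c i z) ^ 2)
        (-2 * ((a i : ℝ) * ε i / (c i y) ^ 3)) y := by
      intro i
      have hsq : HasDerivAt (fun z => (c i z) ^ 2) (2 * (c i y) ^ 1 * ε i) y :=
        (hcder i y).pow 2
      have hne : (c i y) ^ 2 ≠ 0 := pow_ne_zero _ (hcne y hy i)
      have h1 : HasDerivAt (fun z => (a i : ℝ) * ((c i z) ^ 2)⁻¹)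
          ((a i : ℝ) * (-(2 * (c i y) ^ 1 * ε i) / ((c i y) ^ 2) ^ 2)) y :=
        (hsq.inv hne).const_mul _
      have h2 : (a i : ℝ) * (-(2 * c i y ^ 1 * ε i) / (c i y ^ 2) ^ 2)
          = -2 * ((a i : ℝ) * ε i / (c i y) ^ 3) := by
        have := hcne y hy i
        field_simp
      rw [h2] at h1
      simpa [div_eq_mul_inv] using h1
    have := HasDerivAt.fun_sum (u := Finset.univ) (fun i _ => hterm i)
    simpa [hUf_def, Finset.mul_sum] using this
  -- derivative of g
  have hgder : ∀ y ∈ P, HasDerivAt g (2 * (Sf y * (-Tf y)) + 2 * Uf y) y := by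
    intro y hy
    have h1 : HasDerivAt (fun z => (Sf z) ^ 2) (2 * (Sf y) ^ 1 * (-Tf y)) y :=
      (hSder y hy).pow 2
    have h2 := h1.sub (hTder y hy)
    have h3 : 2 * Sf y ^ 1 * -Tf y - (-2 * Uf y) = 2 * (Sf y * (-Tf y)) + 2 * Uf y := by ring
    rw [h3] at h2
    exact h2
  -- evaluation of first derivative
  have h'eval : ∀ y ∈ P, (derivative h).eval y = Hf y * Sf y := by
    intro y hy
    rw [← Polynomial.deriv]
    have hfun : (fun x => h.eval x) = Hf := funext hHeval
    rw [hfun]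
    exact (hHder y hy).deriv
  -- evaluation of second derivative on the open interval
  have hIccnhds : ∀ y ∈ Set.Ioo (0:ℝ) ξ, P ∈ nhds y := fun y hy =>
    mem_nhds_iff.mpr ⟨Set.Ioo 0 ξ, Set.Ioo_subset_Icc_self, isOpen_Ioo, hy⟩
  have h''eval : ∀ y ∈ Set.Ioo (0:ℝ) ξ, (derivative (derivative h)).eval y = Hf y * g y := by
    intro y hy
    have hyP : y ∈ P := Set.Ioo_subset_Icc_self hy
    rw [← Polynomial.deriv]
    have hee : (fun x => (derivative h).eval x) =ᶠ[nhds y] (fun x => Hf x * Sf x) :=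
      Filter.eventuallyEq_of_mem (hIccnhds y hy) (fun x hx => h'eval x hx)
    rw [hee.deriv_eq]
    have hd : HasDerivAt (fun x => Hf x * Sf x)
        (Hf y * Sf y * Sf y + Hf y * (-Tf y)) y := (hHder y hyP).mul (hSder y hyP)
    rw [hd.deriv, hg_def]
    ring
  -- S ξ = 0
  have hSξ : Sf ξ = 0 := by
    have hevξ := h'eval ξ hξP
    rw [hcrit] at hevξ
    exact ((mul_eq_zero.mp hevξ.symm).resolve_left (ne_of_gt (hHpos ξ hξP)))
  -- T positive on P
  have hTpos : ∀ y ∈ P, 0 < Tf y := by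
    intro y hy
    have him : (0:ℝ) < (a im : ℝ) / (c im y) ^ 2 := by
      apply div_pos _ (pow_pos (hcpos y hy im) 2)
      exact lt_of_lt_of_le one_pos (ha1 im)
    apply Finset.sum_pos' (fun i _ => by positivity) ⟨im, Finset.mem_univ im, him⟩
  -- continuity of g
  have hgcont : ContinuousOn g P := fun y hy => (hgder y hy).continuousAt.continuousWithinAt
  -- S strictly decreasing on P
  have hSanti : StrictAntiOn Sf P := by
    rw [hP_def]
    apply strictAntiOn_of_deriv_neg (convex_Icc 0 ξ)
      (fun y hy => (hSder y hy).continuousAt.continuousWithinAt)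
    intro y hy
    rw [interior_Icc] at hy
    have hyP : y ∈ P := Set.Ioo_subset_Icc_self hy
    rw [(hSder y hyP).deriv]
    exact neg_lt_zero.mpr (hTpos y hyP)
  have hSpos : ∀ y ∈ Set.Ico 0 ξ, 0 < Sf y := by
    intro y hy
    have := hSanti (⟨hy.1, le_of_lt hy.2⟩ : y ∈ P) hξP hy.2
    rw [hSξ] at this
    exact this
  -- the key derivative sign lemma at roots of g
  have hkey : ∀ y ∈ Set.Ico 0 ξ, g y = 0 → ∃ m, HasDerivAt g m y ∧ m < 0 := by
    intro y hy hgy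
    have hyP : y ∈ P := ⟨hy.1, le_of_lt hy.2⟩
    refine ⟨_, hgder y hyP, ?_⟩
    have hS := hSpos y hy
    have hT : Tf y = Sf y ^ 2 := by
      have h0 : Sf y ^ 2 - Tf y = 0 := hgy
      linarith
    have hbound : ∀ i : Fin n, (a i : ℝ) * ε i / (c i y) ^ 3 ≤ Sf y * ((a i : ℝ) / (c i y) ^ 2) := by
      intro i
      have hci := hcpos y hyP i
      rcases hε i with h1 | h1
      · have hle : (a i : ℝ) / (c i y) ^ 2 ≤ Tf y := by
          have hTy : Tf y = ∑ j, (a j : ℝ) / (c j y) ^ 2 := rfl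
          rw [hTy]
          exact Finset.single_le_sum (f := fun j => (a j : ℝ) / (c j y) ^ 2)
            (fun j _ => by positivity) (Finset.mem_univ i)
        have h1a : (1 : ℝ) / (c i y) ^ 2 ≤ (a i : ℝ) / (c i y) ^ 2 := by
          gcongr
          exact ha1 i
        have h1c : (1 / c i y) ^ 2 ≤ Sf y ^ 2 := by
          rw [div_pow, one_pow]
          calc (1:ℝ) / c i y ^ 2 ≤ (a i : ℝ) / (c i y) ^ 2 := h1a
            _ ≤ Tf y := hle
            _ = Sf y ^ 2 := hT
        have hadd : 0 < 1 / c i y + Sf y := by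
          have : 0 < 1 / c i y := by positivity
          linarith
        have hinv : 1 / c i y ≤ Sf y := by nlinarith [h1c, hadd]
        rw [h1, mul_one]
        calc (a i : ℝ) / c i y ^ 3 = ((a i : ℝ) / c i y ^ 2) * (1 / c i y) := by
              rw [div_mul_div_comm, mul_one, ← pow_succ]
          _ ≤ ((a i : ℝ) / c i y ^ 2) * Sf y :=
              mul_le_mul_of_nonneg_left hinv (by positivity)
          _ = Sf y * ((a i : ℝ) / c i y ^ 2) := mul_comm _ _
      · rw [h1]
        have hl : (a i : ℝ) * (-1) / c i y ^ 3 ≤ 0 := by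
          apply div_nonpos_of_nonpos_of_nonneg
          · nlinarith [ha1 i]
          · positivity
        have hr : 0 ≤ Sf y * ((a i : ℝ) / c i y ^ 2) := by positivity
        linarith
    have hstrict : (a im : ℝ) * ε im / (c im y) ^ 3 < Sf y * ((a im : ℝ) / (c im y) ^ 2) := by
      have hci := hcpos y hyP im
      rw [him1]
      have hl : (a im : ℝ) * (-1) / c im y ^ 3 < 0 := by
        apply div_neg_of_neg_of_pos
        · nlinarith [ha1 im]
        · positivity
      have hr : 0 < Sf y * ((a im : ℝ) / c im y ^ 2) := by
        apply mul_pos hS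
        apply div_pos _ (pow_pos hci 2)
        exact lt_of_lt_of_le one_pos (ha1 im)
      linarith
    have hU : Uf y < Sf y * Tf y := by
      have hSTf : Sf y * Tf y = ∑ i, Sf y * ((a i : ℝ) / (c i y) ^ 2) := by
        rw [hTf_def, Finset.mul_sum]
      rw [hSTf]
      show (∑ i, (a i : ℝ) * ε i / (c i y) ^ 3) < ∑ i, Sf y * ((a i : ℝ) / (c i y) ^ 2)
      exact Finset.sum_lt_sum (fun i _ => hbound i) ⟨im, Finset.mem_univ im, hstrict⟩
    linarith [hU]
  -- identification of g 0 with the target quantity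
  have hc0 : ∀ i, c i 0 = k i := fun i => by simp [hc_def]
  have hS0 : Sf 0 = ∑ i, ε i * (a i : ℝ) / k i := by
    rw [hSf_def]
    exact Finset.sum_congr rfl fun i _ => by rw [hc0 i]; ring
  have hT0 : Tf 0 = ∑ i, (a i : ℝ) / (k i) ^ 2 := by
    rw [hTf_def]
    exact Finset.sum_congr rfl fun i _ => by rw [hc0 i]
  have hg0 : g 0 = (∑ i, ε i * (a i : ℝ) / k i) ^ 2 - ∑ i, (a i : ℝ) / (k i) ^ 2 := by
    show Sf 0 ^ 2 - Tf 0 = _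
    rw [hS0, hT0]
  -- reduce the statement to a statement about g
  have hLHS : (∃ y ∈ Set.Ioo 0 ξ, (derivative (derivative h)).eval y = 0) ↔
      (∃ y ∈ Set.Ioo 0 ξ, g y = 0) := by
    constructor
    · rintro ⟨y, hy, hy0⟩
      refine ⟨y, hy, ?_⟩
      have hev := h''eval y hy
      rw [hy0] at hev
      exact ((mul_eq_zero.mp hev.symm).resolve_left
        (ne_of_gt (hHpos y (Set.Ioo_subset_Icc_self hy))))
    · rintro ⟨y, hy, hy0⟩
      exact ⟨y, hy, by rw [h''eval y hy, hy0, mul_zero]⟩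
  rw [hLHS, ← hg0]
  constructor
  · -- a root of g in (0, ξ) forces g 0 > 0
    rintro ⟨ys, hys, hgys⟩
    by_contra hcon
    push_neg at hcon
    obtain ⟨m, hdm, hm⟩ := hkey ys ⟨le_of_lt hys.1, hys.2⟩ hgys
    have hleft := pos_slope_left hdm hm hgys
    obtain ⟨w, hgw, hw⟩ := (hleft.and
      (Filter.eventually_of_mem (Ioo_mem_nhdsLT hys.1) (fun z hz => hz))).exists
    -- last point in [0, w] where g ≤ 0
    have hwξ : w < ξ := lt_trans hw.2 hys.2
    have hwP : Set.Icc 0 w ⊆ P := Set.Icc_subset_Icc le_rfl (le_of_lt hwξ)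
    set A : Set ℝ := Set.Icc 0 w ∩ g ⁻¹' (Set.Iic 0) with hA_def
    have hAclosed : IsClosed A :=
      ContinuousOn.preimage_isClosed_of_isClosed (hgcont.mono hwP) isClosed_Icc isClosed_Iic
    have hAne : A.Nonempty := ⟨0, ⟨le_rfl, le_of_lt hw.1⟩, hcon⟩
    have hAbdd : BddAbove A := ⟨w, fun z hz => hz.1.2⟩
    set y₁ := sSup A with hy₁_def
    have hy₁A : y₁ ∈ A := hAclosed.csSup_mem hAne hAbdd
    have hy₁w : y₁ ≤ w := hy₁A.1.2
    have hy₁0 : (0:ℝ) ≤ y₁ := hy₁A.1.1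
    have hy₁g : g y₁ ≤ 0 := hy₁A.2
    have hy₁ltw : y₁ < w := lt_of_le_of_ne hy₁w (fun e => by rw [e] at hy₁g; linarith)
    have hright : ∀ z ∈ Set.Ioc y₁ w, 0 < g z := by
      intro z hz
      by_contra hzg
      push_neg at hzg
      have hzA : z ∈ A := ⟨⟨le_trans hy₁0 (le_of_lt hz.1), hz.2⟩, hzg⟩
      exact absurd (le_csSup hAbdd hzA) (not_le.mpr hz.1)
    have hy₁P : y₁ ∈ P := hwP ⟨hy₁0, hy₁w⟩
    have hge : 0 ≤ g y₁ := by
      have htend : Filter.Tendsto g (nhdsWithin y₁ (Set.Ioi y₁)) (nhds (g y₁)) :=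
        ((hgder y₁ hy₁P).continuousAt.tendsto).mono_left nhdsWithin_le_nhds
      refine ge_of_tendsto htend ?_
      filter_upwards [Ioc_mem_nhdsGT hy₁ltw] with z hz
      exact le_of_lt (hright z hz)
    have hy₁g0 : g y₁ = 0 := le_antisymm hy₁g hge
    obtain ⟨m₁, hdm₁, hm₁⟩ := hkey y₁ ⟨hy₁0, lt_trans hy₁ltw hwξ⟩ hy₁g0
    have hneg := neg_slope_right hdm₁ hm₁ hy₁g0
    obtain ⟨z, hz1, hz2⟩ := (hneg.and
      (Filter.eventually_of_mem (Ioc_mem_nhdsGT hy₁ltw) (fun z hz => hz))).exists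
    exact absurd (hright z hz2) (not_lt.mpr (le_of_lt hz1))
  · -- g 0 > 0 gives a root by the intermediate value theorem
    intro hg0pos
    have hgξ : g ξ < 0 := by
      show Sf ξ ^ 2 - Tf ξ < 0
      rw [hSξ]
      have := hTpos ξ hξP
      nlinarith
    have hIVT := intermediate_value_Ioo' (le_of_lt hξ0) (hP_def ▸ hgcont)
    obtain ⟨y, hy, hgy⟩ := hIVT (⟨hgξ, hg0pos⟩ : (0:ℝ) ∈ Set.Ioo (g ξ) (g 0))
    exact ⟨y, hy, hgy⟩
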